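/- Let A = (a_ij) be an n×n M-matrix. Then there exists ε₀ > 0 such that for every 0 < ε ≤ ε₀, the matrix A(ε) = (a_ij(ε)) is also an M-matrix, where a_ij(ε) = a_ij if a_ij ≠ 0 and a_ij(ε) = -ε if a_ij = 0 (for off-diagonal entries). -/

import Mathlib

open Matrix BigOperators Finset

/-- Spectral radius of a real matrix: supremum of norms of its complex eigenvalues. -/
noncomputable def specRad {n : ℕ} (A : Matrix (Fin n) (Fin n) ℝ) : ℝ :=
  sSup ((fun μ : ℂ => ‖μ‖) '' spectrum ℂ (A.map (algebraMap ℝ ℂ)))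

/-- A Z-matrix has nonpositive off-diagonal entries. -/
def IsZMatrix {n : ℕ} (A : Matrix (Fin n) (Fin n) ℝ) : Prop :=
  ∀ i j, i ≠ j → A i j ≤ 0

/-- An M-matrix is a nonsingular Z-matrix with entrywise nonnegative inverse. -/
def IsMMatrix {n : ℕ} (A : Matrix (Fin n) (Fin n) ℝ) : Prop :=
  IsZMatrix A ∧ IsUnit A.det ∧ ∀ i j, 0 ≤ A⁻¹ i j

/-- `-L`: the strictly lower triangular part of `A` (so `lowerPart A ≥ 0` for a Z-matrix). -/
def lowerPart {n : ℕ} (A : Matrix (Fin n) (Fin n) ℝ) : Matrix (Fin n) (Fin n) ℝ :=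
  Matrix.of fun i j => if (j : ℕ) < (i : ℕ) then -A i j else 0

/-- `-U`: the strictly upper triangular part of `A`. -/
def upperPart {n : ℕ} (A : Matrix (Fin n) (Fin n) ℝ) : Matrix (Fin n) (Fin n) ℝ :=
  Matrix.of fun i j => if (i : ℕ) < (j : ℕ) then -A i j else 0

/-- Diagonal part of `A`. -/
def diagPart {n : ℕ} (A : Matrix (Fin n) (Fin n) ℝ) : Matrix (Fin n) (Fin n) ℝ :=
  Matrix.of fun i j => if i = j then A i j else 0

/-- The preconditioner `P̃ = I + L(α) + U(α)`: unit diagonal, off-diagonal entries `-α_ij a_ij`. -/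
def precond {n : ℕ} (α : Fin n → Fin n → ℝ) (A : Matrix (Fin n) (Fin n) ℝ) :
    Matrix (Fin n) (Fin n) ℝ :=
  Matrix.of fun i j => if i = j then 1 else -(α i j) * A i j

/-- AOR iteration matrix of `B = D_B - L_B - U_B`:
`(D_B - γ L_B)⁻¹ [(1-ω) D_B + (ω-γ) L_B + ω U_B]`. -/
noncomputable def aorMatrix {n : ℕ} (B : Matrix (Fin n) (Fin n) ℝ) (γ ω : ℝ) :
    Matrix (Fin n) (Fin n) ℝ :=
  (diagPart B - γ • lowerPart B)⁻¹ *
    ((1 - ω) • diagPart B + (ω - γ) • lowerPart B + ω • upperPart B)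

/-- Irreducibility: the directed graph with an edge `i → j` whenever `A i j ≠ 0`
is strongly connected. -/
def IsIrreducibleMat {n : ℕ} (A : Matrix (Fin n) (Fin n) ℝ) : Prop :=
  ∀ i j : Fin n, Relation.ReflTransGen (fun a b => A a b ≠ 0) i j

section Aux

attribute [local instance] Matrix.linftyOpNormedRing Matrix.linftyOpNormedAlgebra

variable {n : ℕ}

lemma mul_nonneg_entries {B C : Matrix (Fin n) (Fin n) ℝ}
    (hB : ∀ i j, 0 ≤ B i j) (hC : ∀ i j, 0 ≤ C i j) : ∀ i j, 0 ≤ (B * C) i j := by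
  intro i j
  rw [Matrix.mul_apply]
  exact Finset.sum_nonneg fun k _ => mul_nonneg (hB i k) (hC k j)

lemma pow_nonneg_entries {B : Matrix (Fin n) (Fin n) ℝ}
    (hB : ∀ i j, 0 ≤ B i j) : ∀ k : ℕ, ∀ i j, 0 ≤ (B ^ k) i j := by
  intro k
  induction k with
  | zero => intro i j; simp [pow_zero, Matrix.one_apply]; positivity
  | succ m ih => rw [pow_succ]; exact mul_nonneg_entries ih hB

/-- Evaluation at an entry, as a linear map; continuous by finite dimensionality. -/
noncomputable def evalLM (i j : Fin n) : Matrix (Fin n) (Fin n) ℝ →ₗ[ℝ] ℝ where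
  toFun B := B i j
  map_add' _ _ := rfl
  map_smul' _ _ := rfl

lemma tsum_geom_nonneg {t : Matrix (Fin n) (Fin n) ℝ} (ht : ‖t‖ < 1)
    (htn : ∀ i j, 0 ≤ t i j) : ∀ i j, 0 ≤ (∑' k : ℕ, t ^ k) i j := by
  intro i j
  have hsum := (summable_geometric_of_norm_lt_one ht).hasSum
  have hcont : Continuous (evalLM i j) := (evalLM i j).continuous_of_finiteDimensional
  have htend2 : Filter.Tendsto (fun K : ℕ => (evalLM i j) (∑ k ∈ Finset.range K, t ^ k))
      Filter.atTop (nhds ((evalLM i j) (∑' k : ℕ, t ^ k))) :=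
    (hcont.tendsto _).comp hsum.tendsto_sum_nat
  refine ge_of_tendsto' htend2 fun K => ?_
  have : (evalLM i j) (∑ k ∈ Finset.range K, t ^ k) = ∑ k ∈ Finset.range K, (t ^ k) i j := by
    simp [evalLM, Matrix.sum_apply]
    rfl
  rw [this]
  exact Finset.sum_nonneg fun k _ => pow_nonneg_entries htn k i j

/-- Key perturbation lemma: if `A` is invertible with entrywise nonneg inverse and
`N` is entrywise nonneg, then for small `ε`, `A - ε • N` is invertible with
entrywise nonneg inverse. -/
lemma perturb_aux (A N : Matrix (Fin n) (Fin n) ℝ) (hdet : IsUnit A.det)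
    (hinv : ∀ i j, 0 ≤ A⁻¹ i j) (hN : ∀ i j, 0 ≤ N i j) :
    ∃ ε₀ > (0 : ℝ), ∀ ε : ℝ, 0 < ε → ε ≤ ε₀ →
      IsUnit (A - ε • N).det ∧ ∀ i j, 0 ≤ (A - ε • N)⁻¹ i j := by
  set M : Matrix (Fin n) (Fin n) ℝ := A⁻¹ * N with hM
  refine ⟨(2 * (‖M‖ + 1))⁻¹, by positivity, fun ε hε hε0 => ?_⟩
  set t : Matrix (Fin n) (Fin n) ℝ := ε • M with htdef
  have ht : ‖t‖ < 1 := by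
    rw [htdef, norm_smul]
    have h1 : ‖ε‖ = ε := abs_of_pos hε
    have h2 : 0 ≤ ‖M‖ := norm_nonneg M
    rw [h1]
    calc ε * ‖M‖ ≤ (2 * (‖M‖ + 1))⁻¹ * ‖M‖ := by
          apply mul_le_mul_of_nonneg_right hε0 h2
      _ < 1 := by
          rw [inv_mul_eq_div, div_lt_one (by positivity)]
          nlinarith
  have htn : ∀ i j, 0 ≤ t i j := by
    intro i j
    have : 0 ≤ M i j := mul_nonneg_entries hinv hN i j
    simpa [htdef, Matrix.smul_apply] using mul_nonneg hε.le this
  set S : Matrix (Fin n) (Fin n) ℝ := ∑' k : ℕ, t ^ k with hSdef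
  have hSn : ∀ i j, 0 ≤ S i j := tsum_geom_nonneg ht htn
  have hmul : (1 - t) * S = 1 := mul_neg_geom_series t ht
  have hfact : A - ε • N = A * (1 - t) := by
    have hAA : A * A⁻¹ = 1 := Matrix.mul_nonsing_inv A hdet
    rw [htdef, hM]
    rw [Matrix.mul_sub, mul_one, Matrix.mul_smul, ← Matrix.mul_assoc, hAA, Matrix.one_mul]
  have hright : (A - ε • N) * (S * A⁻¹) = 1 := by
    rw [hfact, Matrix.mul_assoc, ← Matrix.mul_assoc (1 - t), hmul, Matrix.one_mul,
      Matrix.mul_nonsing_inv A hdet]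
  have hdet' : IsUnit (A - ε • N).det := by
    have := congrArg Matrix.det hright
    rw [Matrix.det_mul, Matrix.det_one] at this
    exact IsUnit.of_mul_eq_one _ this
  refine ⟨hdet', ?_⟩
  have hinveq : (A - ε • N)⁻¹ = S * A⁻¹ := Matrix.inv_eq_right_inv hright
  rw [hinveq]
  exact mul_nonneg_entries hSn hinv

end Aux

/-- Perturbing the zero entries of an M-matrix to `-ε` keeps it an
M-matrix for all sufficiently small `ε > 0`. -/
theorem stmt1 {n : ℕ} (A : Matrix (Fin n) (Fin n) ℝ) (hA : IsMMatrix A) :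
    ∃ ε₀ > (0 : ℝ), ∀ ε : ℝ, 0 < ε → ε ≤ ε₀ →
      IsMMatrix (Matrix.of fun i j => if A i j = 0 then -ε else A i j) := by
  obtain ⟨hZ, hdet, hinv⟩ := hA
  have hNn : ∀ i j, 0 ≤ (Matrix.of fun i j => if A i j = 0 then (1:ℝ) else 0) i j := by
    intro i j; simp only [Matrix.of_apply]; split <;> norm_num
  obtain ⟨ε₀, hε₀, h⟩ := perturb_aux A _ hdet hinv hNn
  refine ⟨ε₀, hε₀, fun ε hε hle => ?_⟩
  have heq : (Matrix.of fun i j => if A i j = 0 then -ε else A i j)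
      = A - ε • (Matrix.of fun i j => if A i j = 0 then (1:ℝ) else 0) := by
    ext i j
    simp only [Matrix.of_apply, Matrix.sub_apply, Matrix.smul_apply, smul_eq_mul]
    split
    · next h0 => rw [h0]; ring
    · ring
  rw [heq]
  obtain ⟨hd, hi⟩ := h ε hε hle
  refine ⟨?_, hd, hi⟩
  intro i j hij
  simp only [Matrix.sub_apply, Matrix.smul_apply, Matrix.of_apply, smul_eq_mul]
  split
  · next h0 => rw [h0]; simp; linarith
  · next h0 => have := hZ i j hij; simp; linarith [hZ i j hij]
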